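/- Let K be a field with at least 3 elements and G the group of lower unitriangular n×n matrices over a ring A (block lower triangular with identity diagonal blocks allowed). Then every element of G is a product of commutators of invertible block lower triangular matrices; consequently every group homomorphism from the block lower triangular invertible matrices to K^* is trivial on G. -/

import Mathlib

set_option maxHeartbeats 1000000

/-- The group of invertible lower triangular `n × n` matrices over a ring `A`
(viewing `A` as an algebra of blocks, this is the group of invertible block lower
triangular matrices). -/
def lowerTriangularUnits (A : Type) [Ring A] (n : ℕ) :
    Subgroup (Matrix (Fin n) (Fin n) A)ˣ where
  carrier := {g : (Matrix (Fin n) (Fin n) A)ˣ |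
    (∀ i j : Fin n, i < j → g.val i j = 0) ∧ (∀ i j : Fin n, i < j → g⁻¹.val i j = 0)}
  one_mem' := by
    constructor <;> intro i j hij <;>
      simp [Matrix.one_apply_ne hij.ne]
  mul_mem' := by
    rintro a b ⟨ha, ha'⟩ ⟨hb, hb'⟩
    constructor
    · intro i j hij
      rw [Units.val_mul, Matrix.mul_apply]
      refine Finset.sum_eq_zero fun k _ => ?_
      rcases lt_or_ge i k with hk | hk
      · rw [ha i k hk, zero_mul]
      · rw [hb k j (lt_of_le_of_lt hk hij), mul_zero]
    · intro i j hij
      rw [mul_inv_rev, Units.val_mul, Matrix.mul_apply]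
      refine Finset.sum_eq_zero fun k _ => ?_
      rcases lt_or_ge i k with hk | hk
      · rw [hb' i k hk, zero_mul]
      · rw [ha' k j (lt_of_le_of_lt hk hij), mul_zero]
  inv_mem' := by
    rintro a ⟨h1, h2⟩
    refine ⟨h2, fun i j hij => ?_⟩
    rw [inv_inv]
    exact h1 i j hij

section Aux

variable {A : Type} [Ring A] {n : ℕ}

open Matrix
open scoped commutatorElement

/-- elementary matrix `1 + c E_{ij}` as a unit, for `i ≠ j`. -/
def elemU (i j : Fin n) (h : i ≠ j) (c : A) : (Matrix (Fin n) (Fin n) A)ˣ where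
  val := 1 + Matrix.single i j c
  inv := 1 + Matrix.single i j (-c)
  val_inv := by
    rw [add_mul, mul_add, mul_add, Matrix.single_mul_single_of_ne _ _ _ _ (Ne.symm h)]
    rw [mul_one, one_mul, add_zero, add_assoc, mul_one, ← Matrix.single_add,
      neg_add_cancel, Matrix.single_zero, add_zero]
  inv_val := by
    rw [add_mul, mul_add, mul_add, Matrix.single_mul_single_of_ne _ _ _ _ (Ne.symm h)]
    rw [mul_one, one_mul, add_zero, add_assoc, mul_one, ← Matrix.single_add,
      add_neg_cancel, Matrix.single_zero, add_zero]

lemma elemU_val (i j : Fin n) (h : i ≠ j) (c : A) :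
    (elemU i j h c).val = 1 + Matrix.single i j c := rfl

lemma elemU_inv_val (i j : Fin n) (h : i ≠ j) (c : A) :
    ((elemU i j h c)⁻¹).val = 1 + Matrix.single i j (-c) := rfl

lemma elemU_mem (i j : Fin n) (h : j < i) (c : A) :
    elemU i j h.ne' c ∈ lowerTriangularUnits A n := by
  have hentry : ∀ a b : Fin n, a < b → ∀ e : A,
      ((1 : Matrix (Fin n) (Fin n) A) + Matrix.single i j e) a b = 0 := by
    intro a b hab e
    rw [Matrix.add_apply, Matrix.one_apply_ne hab.ne,
      Matrix.single_apply_of_ne _ _ _ _ _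
        (by rintro ⟨rfl, rfl⟩; exact absurd hab (not_lt.2 h.le)),
      add_zero]
  constructor
  · intro a b hab
    rw [elemU_val]
    exact hentry a b hab c
  · intro a b hab
    rw [elemU_inv_val]
    exact hentry a b hab (-c)

variable (K : Type) [Field K] [Algebra K A]

lemma diag_prod_one (m : Fin n) (x y : K) (hxy : x * y = 1) :
    (fun i : Fin n => (if i = m then algebraMap K A x else 1) *
      (if i = m then algebraMap K A y else 1)) = fun _ => (1 : A) := by
  funext i
  by_cases h : i = m
  · subst h
    rw [if_pos rfl, if_pos rfl, ← _root_.map_mul, hxy, _root_.map_one]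
  · rw [if_neg h, if_neg h, one_mul]

/-- diagonal matrix with `x` in position `m`, `1` elsewhere, as a unit. -/
def diagU (m : Fin n) (x : K) (hx : x ≠ 0) : (Matrix (Fin n) (Fin n) A)ˣ where
  val := Matrix.diagonal (fun i => if i = m then algebraMap K A x else 1)
  inv := Matrix.diagonal (fun i => if i = m then algebraMap K A x⁻¹ else 1)
  val_inv := by
    rw [Matrix.diagonal_mul_diagonal, diag_prod_one K m x x⁻¹ (mul_inv_cancel₀ hx),
      Matrix.diagonal_one]
  inv_val := by
    rw [Matrix.diagonal_mul_diagonal, diag_prod_one K m x⁻¹ x (inv_mul_cancel₀ hx),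
      Matrix.diagonal_one]

lemma diagU_mem (m : Fin n) (x : K) (hx : x ≠ 0) :
    diagU K m x hx ∈ lowerTriangularUnits A n := by
  constructor <;> intro a b hab <;> exact Matrix.diagonal_apply_ne _ hab.ne

lemma std_mul_diag (i j : Fin n) (c : A) (d : Fin n → A) :
    Matrix.single i j c * Matrix.diagonal d = Matrix.single i j (c * d j) := by
  ext a b
  rw [Matrix.mul_diagonal]
  by_cases h : a = i ∧ b = j
  · obtain ⟨rfl, rfl⟩ := h; simp
  · rw [Matrix.single_apply_of_ne _ _ _ _ _ (by tauto),
      Matrix.single_apply_of_ne _ _ _ _ _ (by tauto), zero_mul]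

lemma diag_mul_std (i j : Fin n) (c : A) (d : Fin n → A) :
    Matrix.diagonal d * Matrix.single i j c = Matrix.single i j (d i * c) := by
  ext a b
  rw [Matrix.diagonal_mul]
  by_cases h : a = i ∧ b = j
  · obtain ⟨rfl, rfl⟩ := h; simp
  · rw [Matrix.single_apply_of_ne _ _ _ _ _ (by tauto),
      Matrix.single_apply_of_ne _ _ _ _ _ (by tauto), mul_zero]

/-- every elementary matrix with `j < i` is a commutator of lower triangular units. -/
lemma elemU_mem_commutator (x : K) (hx0 : x ≠ 0) (hx1 : x ≠ 1) (i j : Fin n) (h : j < i)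
    (c : A) :
    elemU i j h.ne' c ∈ ⁅lowerTriangularUnits A n, lowerTriangularUnits A n⁆ := by
  set c' : A := ((1 - x)⁻¹ : K) • c with hc'
  have key : elemU i j h.ne' c = ⁅elemU i j h.ne' c', diagU K i x hx0⁆ := by
    apply Units.ext
    show _ = (elemU i j h.ne' c').val * (diagU K i x hx0).val *
      ((elemU i j h.ne' c')⁻¹).val * ((diagU K i x hx0)⁻¹).val
    rw [elemU_val, elemU_inv_val, elemU_val]
    set D : Matrix (Fin n) (Fin n) A :=
      Matrix.diagonal (fun k => if k = i then algebraMap K A x else 1) with hD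
    set D' : Matrix (Fin n) (Fin n) A :=
      Matrix.diagonal (fun k => if k = i then algebraMap K A x⁻¹ else 1) with hD'
    set S : Matrix (Fin n) (Fin n) A := Matrix.single i j c' with hS
    set T : Matrix (Fin n) (Fin n) A := Matrix.single i j (-c') with hT
    have hSD : S * D = S := by
      rw [hS, hD, std_mul_diag, if_neg h.ne, mul_one]
    have hSD' : S * D' = S := by
      rw [hS, hD', std_mul_diag, if_neg h.ne, mul_one]
    have hDT : D * T = Matrix.single i j (algebraMap K A x * (-c')) := by
      rw [hD, hT, diag_mul_std, if_pos rfl]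
    have hST : S * T = 0 := Matrix.single_mul_single_of_ne _ _ _ _ h.ne _
    have hXD' : Matrix.single i j (algebraMap K A x * (-c')) * D' =
        Matrix.single i j (algebraMap K A x * (-c')) := by
      rw [hD', std_mul_diag, if_neg h.ne, mul_one]
    have hDD' : D * D' = 1 := by
      rw [hD, hD', Matrix.diagonal_mul_diagonal,
        diag_prod_one K i x x⁻¹ (mul_inv_cancel₀ hx0), Matrix.diagonal_one]
    have h1x : (1 : K) - x ≠ 0 := sub_ne_zero.2 (Ne.symm hx1)
    have hDST : (D + S) * T = Matrix.single i j (algebraMap K A x * (-c')) := by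
      rw [add_mul, hST, add_zero, hDT]
    have hcc : c' + algebraMap K A x * (-c') = c := by
      have e1 : c' + algebraMap K A x * (-c') = (1 - algebraMap K A x) * c' := by
        noncomm_ring
      rw [e1, ← map_one (algebraMap K A), ← map_sub, hc', Algebra.smul_def,
        ← mul_assoc, ← _root_.map_mul, mul_inv_cancel₀ h1x, _root_.map_one, one_mul]
    symm
    calc (1 + S) * D * (1 + T) * D'
        = (D + S) * (1 + T) * D' := by rw [add_mul, one_mul, hSD]
      _ = (D + S + Matrix.single i j (algebraMap K A x * (-c'))) * D' := by
          rw [mul_add, mul_one, hDST]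
      _ = 1 + S + Matrix.single i j (algebraMap K A x * (-c')) := by
          rw [add_mul, add_mul, hDD', hSD', hXD']
      _ = 1 + Matrix.single i j c := by
          rw [add_assoc, hS, ← Matrix.single_add, hcc]
  rw [key]
  exact Subgroup.commutator_mem_commutator (elemU_mem i j h _) (diagU_mem K i x hx0)

end Aux

lemma unit_eq_one_of_triangular {A : Type} [Ring A] {n : ℕ}
    (u : (Matrix (Fin n) (Fin n) A)ˣ)
    (hup : ∀ i j : Fin n, i < j → u.val i j = 0)
    (hdiag : ∀ i : Fin n, u.val i i = 1)
    (hlow : ∀ i k : Fin n, k < i → u.val i k = 0) : u = 1 := by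
  apply Units.ext
  show u.val = 1
  ext a b
  rcases lt_trichotomy a b with hab | hab | hab
  · rw [hup a b hab, Matrix.one_apply_ne hab.ne]
  · subst hab
    rw [hdiag a, Matrix.one_apply_eq]
  · rw [hlow a b hab, Matrix.one_apply_ne hab.ne']

lemma clearing_lemma {A : Type} [Ring A] {n : ℕ} (K : Type) [Field K] [Algebra K A]
    (x : K) (hx0 : x ≠ 0) (hx1 : x ≠ 1) (F : ℕ) :
    ∀ j m : ℕ, ∀ u : (Matrix (Fin n) (Fin n) A)ˣ,
    (∀ i k : Fin n, i < k → u.val i k = 0) →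
    (∀ i : Fin n, u.val i i = 1) →
    (∀ i k : Fin n, (k : ℕ) < (i : ℕ) →
      ((k : ℕ) < j ∨ ((k : ℕ) = j ∧ (i : ℕ) < m)) → u.val i k = 0) →
    (n - j) * (n + 1) + (n - m) ≤ F →
    u ∈ ⁅lowerTriangularUnits A n, lowerTriangularUnits A n⁆ := by
  induction F with
  | zero =>
    intro j m u hup hdiag hcl hF
    by_cases hj : n ≤ j
    · have : u = 1 := unit_eq_one_of_triangular u hup hdiag fun i k hki =>
        hcl i k (by exact_mod_cast hki) (Or.inl (lt_of_lt_of_le k.isLt hj))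
      rw [this]; exact Subgroup.one_mem _
    · exfalso
      have h1 : 1 ≤ n - j := by omega
      have := Nat.mul_le_mul_right (n + 1) h1
      omega
  | succ F ih =>
    intro j m u hup hdiag hcl hF
    by_cases hj : n ≤ j
    · have : u = 1 := unit_eq_one_of_triangular u hup hdiag fun i k hki =>
        hcl i k (by exact_mod_cast hki) (Or.inl (lt_of_lt_of_le k.isLt hj))
      rw [this]; exact Subgroup.one_mem _
    push_neg at hj
    by_cases hm : n ≤ m
    · -- column j is fully cleared; move to column j+1
      apply ih (j + 1) 0 u hup hdiag
      · intro i k hki hcase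
        rcases hcase with hk | ⟨_, hi⟩
        · rcases Nat.lt_or_ge (k : ℕ) j with hk' | hk'
          · exact hcl i k hki (Or.inl hk')
          · have hkj : (k : ℕ) = j := by omega
            exact hcl i k hki (Or.inr ⟨hkj, lt_of_lt_of_le i.isLt hm⟩)
        · omega
      · have e1 : (n - j) * (n + 1) = (n - (j + 1)) * (n + 1) + (n + 1) := by
          have : n - j = (n - (j + 1)) + 1 := by omega
          rw [this, Nat.succ_mul]
        omega
    push_neg at hm
    by_cases hmj : m ≤ j
    · -- position (m, j) is not below the diagonal; just advance m
      apply ih j (m + 1) u hup hdiag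
      · intro i k hki hcase
        rcases hcase with hk | ⟨hk, hi⟩
        · exact hcl i k hki (Or.inl hk)
        · have hi' : (i : ℕ) < m := by omega
          exact hcl i k hki (Or.inr ⟨hk, hi'⟩)
      · omega
    push_neg at hmj
    -- clear the entry at (m, j)
    set jf : Fin n := ⟨j, hj⟩ with hjf
    set mf : Fin n := ⟨m, hm⟩ with hmf
    have hjm : jf < mf := by simp [hjf, hmf, Fin.lt_def]; omega
    set c : A := u.val mf jf with hc
    set v := elemU mf jf hjm.ne' c with hv
    set w := v⁻¹ * u with hw
    -- row jf of u is the standard basis row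
    have hrow : ∀ b : Fin n, u.val jf b = if b = jf then 1 else 0 := by
      intro b
      rcases lt_trichotomy (b : ℕ) j with hb | hb | hb
      · rw [if_neg (by rw [hjf]; exact fun hh => absurd (congrArg Fin.val hh) (by simp; omega))]
        exact hcl jf b (by simp [hjf]; omega) (Or.inl hb)
      · have : b = jf := by rw [hjf]; exact Fin.ext (by simpa using hb)
        rw [if_pos this, this, hdiag]
      · rw [if_neg (by exact fun hh => absurd (congrArg Fin.val hh) (by simp [hjf]; omega))]
        exact hup jf b (by simp [hjf, Fin.lt_def]; omega)
    have hwent : ∀ a b : Fin n, w.val a b =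
        u.val a b + (if a = mf then (-c) * u.val jf b else 0) := by
      intro a b
      rw [hw, Units.val_mul, hv, elemU_inv_val, add_mul, one_mul, Matrix.add_apply]
      congr 1
      by_cases ha : a = mf
      · subst ha
        rw [if_pos rfl, Matrix.single_mul_apply_same]
      · rw [if_neg ha, Matrix.single_mul_apply_of_ne _ _ _ _ _ ha]
    have hwup : ∀ a b : Fin n, a < b → w.val a b = 0 := by
      intro a b hab
      rw [hwent, hup a b hab, zero_add]
      by_cases ha : a = mf
      · rw [if_pos ha, hrow, if_neg, mul_zero]
        intro hh
        subst hh
        subst ha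
        exact absurd (hjm.trans hab) (lt_irrefl _)
      · rw [if_neg ha]
    have hwdiag : ∀ a : Fin n, w.val a a = 1 := by
      intro a
      rw [hwent, hdiag a]
      by_cases ha : a = mf
      · rw [if_pos ha, hrow, if_neg, mul_zero, add_zero]
        intro hh
        rw [ha] at hh
        exact absurd hh hjm.ne'
      · rw [if_neg ha, add_zero]
    have hwcl : ∀ i k : Fin n, (k : ℕ) < (i : ℕ) →
        ((k : ℕ) < j ∨ ((k : ℕ) = j ∧ (i : ℕ) < m + 1)) → w.val i k = 0 := by
      intro i k hki hcase
      rw [hwent]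
      by_cases hi : i = mf
      · rw [if_pos hi, hrow]
        by_cases hk : k = jf
        · rw [if_pos hk, mul_one, hk, hi, ← hc]
          exact add_neg_cancel c
        · rw [if_neg hk, mul_zero, add_zero]
          rcases hcase with hcase | ⟨hkj, _⟩
          · exact hcl i k hki (Or.inl hcase)
          · exact absurd (Fin.ext (by simpa [hjf] using hkj) : k = jf) hk
      · rw [if_neg hi, add_zero]
        rcases hcase with hcase | ⟨hkj, him⟩
        · exact hcl i k hki (Or.inl hcase)
        · have : (i : ℕ) ≠ m := fun hh => hi (by rw [hmf]; exact Fin.ext (by simpa using hh))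
          exact hcl i k hki (Or.inr ⟨hkj, by omega⟩)
    have hwmem : w ∈ ⁅lowerTriangularUnits A n, lowerTriangularUnits A n⁆ := by
      apply ih j (m + 1) w hwup hwdiag hwcl
      omega
    have hvmem : v ∈ ⁅lowerTriangularUnits A n, lowerTriangularUnits A n⁆ := by
      rw [hv]
      exact elemU_mem_commutator K x hx0 hx1 mf jf hjm c
    have : u = v * w := by rw [hw, mul_inv_cancel_left]
    rw [this]
    exact Subgroup.mul_mem _ hvmem hwmem

/-- Let `K` be a field with at least 3 elements and let `G` be the group of
lower unitriangular `n × n` matrices over a (block) `K`-algebra `A`.  Then every element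
of `G` is a product of commutators of invertible lower triangular matrices (it lies in
the commutator subgroup of the group of invertible lower triangular matrices);
consequently every group homomorphism from the invertible lower triangular matrices to
`K^*` is trivial on `G`. -/
theorem unitriangular_subset_commutators
    (K : Type) [Field K] (hK : ∃ x : K, x ≠ 0 ∧ x ≠ 1)
    (A : Type) [Ring A] [Algebra K A] (n : ℕ) :
    (∀ u : (Matrix (Fin n) (Fin n) A)ˣ,
      (∀ i j : Fin n, i < j → u.val i j = 0) →
      (∀ i : Fin n, u.val i i = 1) →
      u ∈ ⁅lowerTriangularUnits A n, lowerTriangularUnits A n⁆) ∧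
    (∀ φ : lowerTriangularUnits A n →* Kˣ, ∀ u : lowerTriangularUnits A n,
      (∀ i j : Fin n, i < j → u.val.val i j = 0) →
      (∀ i : Fin n, u.val.val i i = 1) →
      φ u = 1) := by
  obtain ⟨x, hx0, hx1⟩ := hK
  have main : ∀ u : (Matrix (Fin n) (Fin n) A)ˣ,
      (∀ i j : Fin n, i < j → u.val i j = 0) →
      (∀ i : Fin n, u.val i i = 1) →
      u ∈ ⁅lowerTriangularUnits A n, lowerTriangularUnits A n⁆ := by
    intro u hup hdiag
    apply clearing_lemma K x hx0 hx1 (n * (n + 1) + n) 0 0 u hup hdiag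
    · intro i k _ hcase
      rcases hcase with hk | ⟨_, hi⟩
      · omega
      · omega
    · have : n - 0 = n := rfl
      simp [this]
  refine ⟨main, ?_⟩
  intro φ u hup hdiag
  have hu := main u.val hup hdiag
  have hmap : ⁅lowerTriangularUnits A n, lowerTriangularUnits A n⁆ = Subgroup.map (lowerTriangularUnits A n).subtype ⁅(⊤ : Subgroup (lowerTriangularUnits A n)), (⊤ : Subgroup (lowerTriangularUnits A n))⁆ := by
    rw [Subgroup.map_commutator, ← MonoidHom.range_eq_map, Subgroup.subtype_range]
  rw [hmap] at hu
  obtain ⟨w, hw, hwu⟩ := hu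
  have hker : ⁅(⊤ : Subgroup (lowerTriangularUnits A n)), (⊤ : Subgroup (lowerTriangularUnits A n))⁆ ≤ φ.ker := by
    rw [Subgroup.commutator_le]
    intro p _ q _
    rw [MonoidHom.mem_ker, map_commutatorElement]
    exact commutatorElement_eq_one_iff_commute.mpr (mul_comm _ _)
  have hwu' : w = u := Subtype.ext hwu
  rw [← hwu']
  exact MonoidHom.mem_ker.mp (hker hw)
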